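/- For integers n < 0 and m ≥ 1, with G = {1,...,m} and p_G̃(x) = ∏_{i=1}^m (x - i - 1) (so 1/p_G̃'(i+1) = (-1)^{m+i} C(m-1, i-1)/(m-1)!), the sum ∑_{i=1}^m ((-1)^{i+1}/(m-1)!) C(m-1,i-1) i! a^{m-i} c_i^{-a}(-n-1) equals (-1)^{m+1} a^{m+n+1} (-n-1)! ∑_{i=1}^m c_{-n-1}^{-a}(i)/p_G̃'(i+1). Consequently this sum vanishes for 1-m ≤ n < 0. -/

import Mathlib

open Finset

/-- The Charlier polynomial `c_n^a(x) = (1/n!) ∑_{j=0}^n (-a)^{n-j} C(n,j) C(x,j) j!`,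
where `C(x,j) j! = ∏_{i=0}^{j-1} (x - i)`. -/
noncomputable def charlier (a : ℂ) (n : ℕ) (x : ℂ) : ℂ :=
  (1 / n.factorial) * ∑ j ∈ Finset.range (n + 1),
    (-a) ^ (n - j) * (n.choose j) * ∏ i ∈ Finset.range j, (x - i)

lemma prod_range_cast_sub (N j : ℕ) :
    ∏ k ∈ Finset.range j, ((N : ℂ) - k) = (N.descFactorial j : ℂ) := by
  induction j with
  | zero => simp
  | succ j ih =>
    rw [Finset.prod_range_succ, ih, Nat.descFactorial_succ]
    by_cases h : j ≤ N
    · push_cast [h]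
      ring
    · have h1 : N.descFactorial j = 0 := Nat.descFactorial_of_lt (by omega)
      have h2 : N - j = 0 := by omega
      simp [h1, h2]

lemma factorial_mul_charlier (a : ℂ) (i N : ℕ) :
    (i.factorial : ℂ) * charlier (-a) i (N : ℂ) =
      ∑ j ∈ Finset.range (i + 1),
        a ^ (i - j) * (i.choose j : ℂ) * (N.descFactorial j : ℂ) := by
  rw [charlier, ← mul_assoc, mul_one_div,
    div_self (by exact_mod_cast i.factorial_ne_zero), one_mul]
  refine Finset.sum_congr rfl fun j _ => ?_
  rw [neg_neg, prod_range_cast_sub]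

lemma charlier_dual (a : ℂ) (i N : ℕ) :
    a ^ N * ((i.factorial : ℂ) * charlier (-a) i (N : ℂ)) =
      a ^ i * ((N.factorial : ℂ) * charlier (-a) N (i : ℂ)) := by
  rw [factorial_mul_charlier, factorial_mul_charlier, Finset.mul_sum, Finset.mul_sum]
  have ext : ∀ (p q K : ℕ), p + 1 ≤ K →
      ∑ j ∈ Finset.range (p + 1),
        a ^ q * (a ^ (p - j) * (p.choose j : ℂ) * (q.descFactorial j : ℂ)) =
      ∑ j ∈ Finset.range K,
        a ^ q * (a ^ (p - j) * (p.choose j : ℂ) * (q.descFactorial j : ℂ)) := by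
    intro p q K hK
    refine Finset.sum_subset (fun x hx => ?_) (fun j hj hnj => ?_)
    · simp only [Finset.mem_range] at hx ⊢; omega
    · simp only [Finset.mem_range] at hj hnj
      have : p < j := by omega
      simp [Nat.choose_eq_zero_of_lt this]
  rw [ext i N (i + N + 1) (by omega), ext N i (i + N + 1) (by omega)]
  refine Finset.sum_congr rfl fun j _ => ?_
  by_cases hji : j ≤ i
  · by_cases hjN : j ≤ N
    · have hcc : i.choose j * N.descFactorial j = N.choose j * i.descFactorial j := by
        rw [Nat.descFactorial_eq_factorial_mul_choose, Nat.descFactorial_eq_factorial_mul_choose]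
        ring
      have hcc' : (i.choose j : ℂ) * (N.descFactorial j : ℂ)
          = (N.choose j : ℂ) * (i.descFactorial j : ℂ) := by exact_mod_cast congrArg Nat.cast hcc
      have e1 : a ^ N * a ^ (i - j) = a ^ i * a ^ (N - j) := by
        rw [← pow_add, ← pow_add, show N + (i - j) = i + (N - j) by omega]
      calc a ^ N * (a ^ (i - j) * (i.choose j : ℂ) * (N.descFactorial j : ℂ))
          = (a ^ N * a ^ (i - j)) * ((i.choose j : ℂ) * (N.descFactorial j : ℂ)) := by ring
        _ = (a ^ i * a ^ (N - j)) * ((N.choose j : ℂ) * (i.descFactorial j : ℂ)) := by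
            rw [e1, hcc']
        _ = a ^ i * (a ^ (N - j) * (N.choose j : ℂ) * (i.descFactorial j : ℂ)) := by ring
    · have h1 : N.descFactorial j = 0 := Nat.descFactorial_of_lt (by omega)
      have h2 : N.choose j = 0 := Nat.choose_eq_zero_of_lt (by omega)
      simp [h1, h2]
  · have h1 : i.descFactorial j = 0 := Nat.descFactorial_of_lt (by omega)
    have h2 : i.choose j = 0 := Nat.choose_eq_zero_of_lt (by omega)
    simp [h1, h2]

lemma alt_sum_choose_choose (M j : ℕ) (hj : j < M) :
    ∑ k ∈ Finset.range (M + 1),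
      (-1 : ℂ) ^ k * (M.choose k : ℂ) * (k.choose j : ℂ) = 0 := by
  have hsub : Finset.Ico j (M + 1) ⊆ Finset.range (M + 1) := by
    intro x hx
    simp only [Finset.mem_Ico] at hx
    simp only [Finset.mem_range]; omega
  have hz : ∀ k ∈ Finset.range (M + 1), k ∉ Finset.Ico j (M + 1) →
      (-1 : ℂ) ^ k * (M.choose k : ℂ) * (k.choose j : ℂ) = 0 := by
    intro k hk hnk
    simp only [Finset.mem_range] at hk
    simp only [Finset.mem_Ico] at hnk
    have : k < j := by omega
    simp [Nat.choose_eq_zero_of_lt this]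
  rw [← Finset.sum_subset hsub hz, Finset.sum_Ico_eq_sum_range]
  have hMj : M + 1 - j = (M - j) + 1 := by omega
  rw [hMj]
  have key : ∀ t ∈ Finset.range ((M - j) + 1),
      (-1 : ℂ) ^ (j + t) * (M.choose (j + t) : ℂ) * ((j + t).choose j : ℂ) =
        ((-1 : ℂ) ^ j * (M.choose j : ℂ)) * ((-1 : ℂ) ^ t * ((M - j).choose t : ℂ)) := by
    intro t ht
    simp only [Finset.mem_range] at ht
    have hkn : j + t ≤ M := by omega
    have hsk : j ≤ j + t := by omega
    have hcm := Nat.choose_mul (n := M) hsk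
    rw [show j + t - j = t by omega] at hcm
    have hcm' : (M.choose (j + t) : ℂ) * ((j + t).choose j : ℂ)
        = (M.choose j : ℂ) * ((M - j).choose t : ℂ) := by exact_mod_cast congrArg Nat.cast hcm
    rw [pow_add]
    calc (-1 : ℂ) ^ j * (-1 : ℂ) ^ t * (M.choose (j + t) : ℂ) * ((j + t).choose j : ℂ)
        = (-1 : ℂ) ^ j * (-1 : ℂ) ^ t * ((M.choose (j + t) : ℂ) * ((j + t).choose j : ℂ)) := by
          ring
      _ = (-1 : ℂ) ^ j * (-1 : ℂ) ^ t * ((M.choose j : ℂ) * ((M - j).choose t : ℂ)) := by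
          rw [hcm']
      _ = ((-1 : ℂ) ^ j * (M.choose j : ℂ)) * ((-1 : ℂ) ^ t * ((M - j).choose t : ℂ)) := by ring
  rw [Finset.sum_congr rfl key, ← Finset.mul_sum]
  have halt := Int.alternating_sum_range_choose_of_ne (n := M - j) (by omega)
  have : ∑ t ∈ Finset.range ((M - j) + 1), (-1 : ℂ) ^ t * ((M - j).choose t : ℂ) = 0 := by
    exact_mod_cast halt
  rw [this, mul_zero]

lemma alt_sum_descFactorial (M j : ℕ) (hj : j < M) :
    ∑ k ∈ Finset.range (M + 1),
      (-1 : ℂ) ^ k * (M.choose k : ℂ) * (((k + 1).descFactorial j : ℕ) : ℂ) = 0 := by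
  cases j with
  | zero =>
    simp only [Nat.descFactorial_zero, Nat.cast_one, mul_one]
    have halt := Int.alternating_sum_range_choose_of_ne (n := M) (by omega)
    exact_mod_cast halt
  | succ j' =>
    have key : ∀ k ∈ Finset.range (M + 1),
        (-1 : ℂ) ^ k * (M.choose k : ℂ) * (((k + 1).descFactorial (j' + 1) : ℕ) : ℂ) =
          ((j' + 1).factorial : ℂ) * ((-1 : ℂ) ^ k * (M.choose k : ℂ) * (k.choose j' : ℂ)) +
          ((j' + 1).factorial : ℂ) * ((-1 : ℂ) ^ k * (M.choose k : ℂ) * (k.choose (j' + 1) : ℂ)) := by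
      intro k _
      rw [Nat.descFactorial_eq_factorial_mul_choose, Nat.choose_succ_succ']
      push_cast
      ring
    rw [Finset.sum_congr rfl key, Finset.sum_add_distrib, ← Finset.mul_sum, ← Finset.mul_sum,
      alt_sum_choose_choose M j' (by omega), alt_sum_choose_choose M (j' + 1) hj]
    simp

lemma sum_vanish (a : ℂ) (m N : ℕ) (hm : 2 ≤ m) (hN : N < m - 1) :
    ∑ k ∈ Finset.range m,
      (-1 : ℂ) ^ k * ((m - 1).choose k : ℂ) * charlier (-a) N ((k : ℂ) + 1) = 0 := by
  obtain ⟨M, rfl⟩ : ∃ M, m = M + 1 := ⟨m - 1, by omega⟩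
  simp only [Nat.add_sub_cancel] at hN ⊢
  have hch : ∀ k : ℕ, charlier (-a) N ((k : ℂ) + 1) =
      ∑ j ∈ Finset.range (N + 1),
        (1 / (N.factorial : ℂ)) * (a ^ (N - j) * (N.choose j : ℂ) *
          (((k + 1).descFactorial j : ℕ) : ℂ)) := by
    intro k
    rw [charlier, Finset.mul_sum]
    refine Finset.sum_congr rfl fun j _ => ?_
    have hc : ((k : ℂ) + 1) = (((k + 1 : ℕ) : ℂ)) := by push_cast; ring
    rw [neg_neg, hc, prod_range_cast_sub]
    try ring
  simp only [hch, Finset.mul_sum]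
  rw [Finset.sum_comm]
  refine Finset.sum_eq_zero fun j hj => ?_
  simp only [Finset.mem_range] at hj
  have key : ∀ k ∈ Finset.range (M + 1),
      (-1 : ℂ) ^ k * ((M.choose k : ℂ)) *
        ((1 / (N.factorial : ℂ)) * (a ^ (N - j) * (N.choose j : ℂ) *
          (((k + 1).descFactorial j : ℕ) : ℂ))) =
      ((1 / (N.factorial : ℂ)) * (a ^ (N - j) * (N.choose j : ℂ))) *
        ((-1 : ℂ) ^ k * (M.choose k : ℂ) * (((k + 1).descFactorial j : ℕ) : ℂ)) := by
    intro k _; ring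
  rw [Finset.sum_congr rfl key, ← Finset.mul_sum,
    alt_sum_descFactorial M j (by omega), mul_zero]

/-- For integers `n < 0` and `m ≥ 1`, with `1/p_G̃'(i+1) = (-1)^{m+i} C(m-1,i-1)/(m-1)!`,
the sum `∑_{i=1}^m ((-1)^{i+1}/(m-1)!) C(m-1,i-1) i! a^{m-i} c_i^{-a}(-n-1)` equals
`(-1)^{m+1} a^{m+n+1} (-n-1)! ∑_{i=1}^m c_{-n-1}^{-a}(i) / p_G̃'(i+1)`;
consequently it vanishes for `1-m ≤ n < 0`. -/
theorem charlier_dual_sum (a : ℂ) (ha : a ≠ 0) (m : ℕ) (hm : 1 ≤ m)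
    (n : ℤ) (hn : n < 0) :
    (∑ i ∈ Finset.Icc 1 m, ((-1 : ℂ) ^ (i + 1) / ((m - 1).factorial : ℂ)) *
        ((m - 1).choose (i - 1)) * (i.factorial : ℂ) * a ^ (m - i) *
        charlier (-a) i (-(n : ℂ) - 1) =
      (-1 : ℂ) ^ (m + 1) * a ^ ((m : ℤ) + n + 1) * (((-n - 1).toNat.factorial : ℂ)) *
        ∑ i ∈ Finset.Icc 1 m, charlier (-a) (-n - 1).toNat (i : ℂ) *
          ((-1 : ℂ) ^ (m + i) * ((m - 1).choose (i - 1)) / ((m - 1).factorial : ℂ))) ∧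
    (1 - (m : ℤ) ≤ n →
      ∑ i ∈ Finset.Icc 1 m, ((-1 : ℂ) ^ (i + 1) / ((m - 1).factorial : ℂ)) *
        ((m - 1).choose (i - 1)) * (i.factorial : ℂ) * a ^ (m - i) *
        charlier (-a) i (-(n : ℂ) - 1) = 0) := by
  set N : ℕ := (-n - 1).toNat with hNdef
  have hNz : (N : ℤ) = -n - 1 := Int.toNat_of_nonneg (by omega)
  have hNc : -(n : ℂ) - 1 = (N : ℂ) := by
    have : ((N : ℤ) : ℂ) = ((-n - 1 : ℤ) : ℂ) := by rw [hNz]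
    push_cast at this
    exact this.symm
  have h1 : (∑ i ∈ Finset.Icc 1 m, ((-1 : ℂ) ^ (i + 1) / ((m - 1).factorial : ℂ)) *
        ((m - 1).choose (i - 1)) * (i.factorial : ℂ) * a ^ (m - i) *
        charlier (-a) i (-(n : ℂ) - 1) =
      (-1 : ℂ) ^ (m + 1) * a ^ ((m : ℤ) + n + 1) * ((N.factorial : ℂ)) *
        ∑ i ∈ Finset.Icc 1 m, charlier (-a) N (i : ℂ) *
          ((-1 : ℂ) ^ (m + i) * ((m - 1).choose (i - 1)) / ((m - 1).factorial : ℂ))) := by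
    rw [hNc]
    apply mul_right_cancel₀ (pow_ne_zero N ha)
    have hz : a ^ ((m : ℤ) + n + 1) * a ^ N = a ^ m := by
      rw [← zpow_natCast a N, ← zpow_add₀ ha, show (m : ℤ) + n + 1 + N = (m : ℤ) by omega,
        zpow_natCast]
    rw [Finset.sum_mul]
    have hrhs : ((-1 : ℂ) ^ (m + 1) * a ^ ((m : ℤ) + n + 1) * (N.factorial : ℂ) *
        ∑ i ∈ Finset.Icc 1 m, charlier (-a) N (i : ℂ) *
          ((-1 : ℂ) ^ (m + i) * ((m - 1).choose (i - 1)) / ((m - 1).factorial : ℂ))) * a ^ N =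
        ∑ i ∈ Finset.Icc 1 m, (-1 : ℂ) ^ (m + 1) * a ^ m * (N.factorial : ℂ) *
          (charlier (-a) N (i : ℂ) *
            ((-1 : ℂ) ^ (m + i) * ((m - 1).choose (i - 1)) / ((m - 1).factorial : ℂ))) := by
      have : ((-1 : ℂ) ^ (m + 1) * a ^ ((m : ℤ) + n + 1) * (N.factorial : ℂ) *
          ∑ i ∈ Finset.Icc 1 m, charlier (-a) N (i : ℂ) *
            ((-1 : ℂ) ^ (m + i) * ((m - 1).choose (i - 1)) / ((m - 1).factorial : ℂ))) * a ^ N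
          = (-1 : ℂ) ^ (m + 1) * (a ^ ((m : ℤ) + n + 1) * a ^ N) * (N.factorial : ℂ) *
          ∑ i ∈ Finset.Icc 1 m, charlier (-a) N (i : ℂ) *
            ((-1 : ℂ) ^ (m + i) * ((m - 1).choose (i - 1)) / ((m - 1).factorial : ℂ)) := by
        ring
      rw [this, hz, Finset.mul_sum]
    rw [hrhs]
    refine Finset.sum_congr rfl fun i hi => ?_
    simp only [Finset.mem_Icc] at hi
    have him : i ≤ m := hi.2
    have hd := charlier_dual a i N
    have hpow : a ^ (m - i) * a ^ i = a ^ m := by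
      rw [← pow_add, Nat.sub_add_cancel him]
    have hsign : (-1 : ℂ) ^ (m + 1) * (-1 : ℂ) ^ (m + i) = (-1 : ℂ) ^ (i + 1) := by
      rw [← pow_add, show m + 1 + (m + i) = 2 * m + (i + 1) by ring, pow_add, pow_mul]
      simp
    calc ((-1 : ℂ) ^ (i + 1) / ((m - 1).factorial : ℂ)) * ((m - 1).choose (i - 1) : ℂ) *
          (i.factorial : ℂ) * a ^ (m - i) * charlier (-a) i (N : ℂ) * a ^ N
        = ((-1 : ℂ) ^ (i + 1) / ((m - 1).factorial : ℂ)) * ((m - 1).choose (i - 1) : ℂ) *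
          a ^ (m - i) * (a ^ N * ((i.factorial : ℂ) * charlier (-a) i (N : ℂ))) := by ring
      _ = ((-1 : ℂ) ^ (i + 1) / ((m - 1).factorial : ℂ)) * ((m - 1).choose (i - 1) : ℂ) *
          a ^ (m - i) * (a ^ i * ((N.factorial : ℂ) * charlier (-a) N (i : ℂ))) := by rw [hd]
      _ = ((-1 : ℂ) ^ (i + 1) / ((m - 1).factorial : ℂ)) * ((m - 1).choose (i - 1) : ℂ) *
          (a ^ (m - i) * a ^ i) * ((N.factorial : ℂ) * charlier (-a) N (i : ℂ)) := by ring
      _ = ((-1 : ℂ) ^ (i + 1) / ((m - 1).factorial : ℂ)) * ((m - 1).choose (i - 1) : ℂ) *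
          a ^ m * ((N.factorial : ℂ) * charlier (-a) N (i : ℂ)) := by rw [hpow]
      _ = (-1 : ℂ) ^ (m + 1) * a ^ m * (N.factorial : ℂ) *
          (charlier (-a) N (i : ℂ) *
            ((-1 : ℂ) ^ (m + i) * ((m - 1).choose (i - 1) : ℂ) / ((m - 1).factorial : ℂ))) := by
        rw [← hsign]; ring
  refine ⟨h1, fun h => ?_⟩
  rw [h1]
  have hm2 : 2 ≤ m := by omega
  have hNm : N < m - 1 := by omega
  have hsum0 : ∑ i ∈ Finset.Icc 1 m, charlier (-a) N (i : ℂ) *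
      ((-1 : ℂ) ^ (m + i) * ((m - 1).choose (i - 1) : ℂ) / ((m - 1).factorial : ℂ)) = 0 := by
    rw [← Finset.Ico_add_one_right_eq_Icc, Finset.sum_Ico_eq_sum_range]
    simp only [Nat.add_sub_cancel, Nat.succ_sub_one]
    have key : ∀ k ∈ Finset.range m,
        charlier (-a) N ((1 + k : ℕ) : ℂ) *
          ((-1 : ℂ) ^ (m + (1 + k)) * ((m - 1).choose (1 + k - 1) : ℂ) / ((m - 1).factorial : ℂ)) =
        ((-1 : ℂ) ^ (m + 1) / ((m - 1).factorial : ℂ)) *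
          ((-1 : ℂ) ^ k * ((m - 1).choose k : ℂ) * charlier (-a) N ((k : ℂ) + 1)) := by
      intro k _
      have e1 : ((1 + k : ℕ) : ℂ) = (k : ℂ) + 1 := by push_cast; ring
      have e2 : (1 + k) - 1 = k := by omega
      have e3 : (-1 : ℂ) ^ (m + (1 + k)) = (-1 : ℂ) ^ (m + 1) * (-1 : ℂ) ^ k := by
        rw [← pow_add]; congr 1; ring
      rw [e1, e2, e3]
      ring
    rw [Finset.sum_congr rfl key, ← Finset.mul_sum, sum_vanish a m N hm2 hNm, mul_zero]
  rw [hsum0, mul_zero]
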